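/- Let R = k[x]/(x²) for a field k, and let M = R as a right R-module. Then M is centrally quasi-morphic but not centrally morphic: for every f ∈ End_R(M) there exist central g, h ∈ End_R(M) with im(f) = ker(g) and ker(f) = im(h), yet there exists f ∈ End_R(M) for which no single central g satisfies both im(f) = ker(g) and ker(f) = im(g) with g arising from a central idempotent decomposition—concretely, multiplication by x̄ has image and kernel both equal to x̄R, which is not of the form eM for any idempotent e ∈ R. -/
import Mathlib


universe u

set_option synthInstance.maxHeartbeats 1000000
set_option maxHeartbeats 1000000

open Polynomial

/-- The ring `k[x]/(x²)`. -/
abbrev DualNumbersRing (k : Type u) [Field k] :=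
  Polynomial k ⧸ Ideal.span {(Polynomial.X : Polynomial k) ^ 2}

/-- The image `x̄` of `x` in `k[x]/(x²)`. -/
noncomputable def xbar (k : Type u) [Field k] : DualNumbersRing k :=
  Ideal.Quotient.mk _ Polynomial.X

section Aux

variable (k : Type u) [Field k]

lemma xbar_sq : xbar k * xbar k = 0 := by
  rw [xbar, ← map_mul, ← sq, Ideal.Quotient.eq_zero_iff_mem]
  exact Ideal.subset_span rfl

lemma xbar_ne_zero : xbar k ≠ 0 := by
  rw [xbar, Ne, Ideal.Quotient.eq_zero_iff_mem, Ideal.mem_span_singleton]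
  intro h
  have := (Polynomial.X_pow_dvd_iff.mp h) 1 (by norm_num)
  simp at this

lemma mem_span_xbar_iff (a : DualNumbersRing k) :
    a ∈ Ideal.span {xbar k} ↔ a * xbar k = 0 := by
  constructor
  · rw [Ideal.mem_span_singleton]
    rintro ⟨b, rfl⟩
    rw [mul_comm (xbar k) b, mul_assoc, xbar_sq, mul_zero]
  · intro h
    obtain ⟨p, rfl⟩ := Ideal.Quotient.mk_surjective a
    rw [xbar, ← map_mul, Ideal.Quotient.eq_zero_iff_mem, Ideal.mem_span_singleton] at h
    have h0 : p.coeff 0 = 0 := by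
      have := (Polynomial.X_pow_dvd_iff.mp h) 1 (by norm_num)
      simpa using this
    rw [Ideal.mem_span_singleton]
    obtain ⟨q, rfl⟩ := Polynomial.X_dvd_iff.mpr h0
    exact ⟨Ideal.Quotient.mk _ q, by rw [xbar, ← map_mul]⟩

lemma unit_or_mem (a : DualNumbersRing k) :
    IsUnit a ∨ a ∈ Ideal.span {xbar k} := by
  obtain ⟨p, rfl⟩ := Ideal.Quotient.mk_surjective a
  by_cases h0 : p.coeff 0 = 0
  · right
    rw [Ideal.mem_span_singleton]
    obtain ⟨q, rfl⟩ := Polynomial.X_dvd_iff.mpr h0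
    exact ⟨Ideal.Quotient.mk _ q, by rw [xbar, ← map_mul]⟩
  · left
    set c := p.coeff 0 with hc
    set d := p.coeff 1 with hd
    have hp : (Ideal.Quotient.mk _ p : DualNumbersRing k)
        = Ideal.Quotient.mk _ (C c + C d * X) := by
      rw [Ideal.Quotient.eq, Ideal.mem_span_singleton]
      rw [Polynomial.X_pow_dvd_iff]
      intro i hi
      interval_cases i <;> simp [hc, hd]
    rw [hp, map_add]
    have hu : IsUnit ((Ideal.Quotient.mk _ (C c) : DualNumbersRing k)) := by
      apply IsUnit.map
      exact (Polynomial.isUnit_C).mpr (isUnit_iff_ne_zero.mpr h0)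
    have hn : IsNilpotent ((Ideal.Quotient.mk _ (C d * X) : DualNumbersRing k)) := by
      refine ⟨2, ?_⟩
      rw [← map_pow, Ideal.Quotient.eq_zero_iff_mem, Ideal.mem_span_singleton]
      exact ⟨C d ^ 2, by ring⟩
    exact hn.isUnit_add_left_of_commute hu (Commute.all _ _)

lemma end_apply (f : Module.End (DualNumbersRing k) (DualNumbersRing k))
    (z : DualNumbersRing k) : f z = z * f 1 := by
  conv_lhs => rw [← mul_one z, ← smul_eq_mul, map_smul, smul_eq_mul]

lemma end_commute (g s : Module.End (DualNumbersRing k) (DualNumbersRing k)) :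
    Commute g s := by
  refine LinearMap.ext fun z => ?_
  show g (s z) = s (g z)
  rw [end_apply k s z, end_apply k g (z * s 1), end_apply k g z, end_apply k s (z * g 1)]
  ring

lemma end_range (f : Module.End (DualNumbersRing k) (DualNumbersRing k)) :
    LinearMap.range f = Ideal.span {f 1} := by
  ext y
  rw [LinearMap.mem_range, Ideal.mem_span_singleton]
  constructor
  · rintro ⟨z, rfl⟩; exact ⟨z, by rw [end_apply, mul_comm]⟩
  · rintro ⟨z, rfl⟩; exact ⟨z, by rw [end_apply, mul_comm]⟩

lemma ker_mulx :
    LinearMap.ker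
        (xbar k • (LinearMap.id : DualNumbersRing k →ₗ[DualNumbersRing k] DualNumbersRing k))
      = Ideal.span {xbar k} := by
  ext z
  rw [LinearMap.mem_ker, end_apply k _ z, mem_span_xbar_iff]
  simp [mul_comm]

lemma range_mulx :
    LinearMap.range
        (xbar k • (LinearMap.id : DualNumbersRing k →ₗ[DualNumbersRing k] DualNumbersRing k))
      = Ideal.span {xbar k} := by
  rw [end_range]
  congr 1
  simp

lemma xbar_not_unit : ¬ IsUnit (xbar k) := fun h =>
  xbar_ne_zero k ((h.mul_right_eq_zero).mp (xbar_sq k))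


end Aux

/-- over `R = k[x]/(x²)`, the module `M = R` is centrally quasi-morphic,
but multiplication by `x̄` has image and kernel both equal to `x̄R`, which is not of the
form `eR` for any idempotent `e ∈ R`; in particular `M` is not centrally morphic in the
idempotent-decomposition sense. -/

theorem stmt_19 (k : Type u) [Field k] :
    (∀ f : Module.End (DualNumbersRing k) (DualNumbersRing k),
      ∃ g h : Module.End (DualNumbersRing k) (DualNumbersRing k),
        (∀ s, Commute g s) ∧ (∀ s, Commute h s) ∧
        LinearMap.range f = LinearMap.ker g ∧
        LinearMap.ker f = LinearMap.range h) ∧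
    (LinearMap.range
        (xbar k • (LinearMap.id : DualNumbersRing k →ₗ[DualNumbersRing k] DualNumbersRing k))
      = Ideal.span {xbar k}) ∧
    (LinearMap.ker
        (xbar k • (LinearMap.id : DualNumbersRing k →ₗ[DualNumbersRing k] DualNumbersRing k))
      = Ideal.span {xbar k}) ∧
    ¬ ∃ e : DualNumbersRing k, IsIdempotentElem e ∧
        (Ideal.span {xbar k} : Ideal (DualNumbersRing k)) = Ideal.span {e} := by
  refine ⟨?_, range_mulx k, ker_mulx k, ?_⟩
  · intro f
    rcases unit_or_mem k (f 1) with hu | hmem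
    · refine ⟨0, 0, fun s => end_commute k _ s, fun s => end_commute k _ s, ?_, ?_⟩
      · rw [end_range, LinearMap.ker_zero]
        exact Ideal.span_singleton_eq_top.mpr hu
      · rw [LinearMap.range_zero]
        ext z
        rw [LinearMap.mem_ker, end_apply k f z, Submodule.mem_bot, hu.mul_left_eq_zero]
    · by_cases h0 : f 1 = 0
      · have hf : f = 0 := LinearMap.ext fun z => by
          rw [end_apply k f z, h0, mul_zero]; rfl
        refine ⟨1, 1, fun s => end_commute k _ s, fun s => end_commute k _ s, ?_, ?_⟩
        · rw [hf, LinearMap.range_zero,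
            show (1 : Module.End (DualNumbersRing k) (DualNumbersRing k)) = LinearMap.id from rfl,
            LinearMap.ker_id]
        · rw [hf, LinearMap.ker_zero,
            show (1 : Module.End (DualNumbersRing k) (DualNumbersRing k)) = LinearMap.id from rfl,
            LinearMap.range_id]
      · obtain ⟨b, hb⟩ := Ideal.mem_span_singleton.mp hmem
        have hbu : IsUnit b := by
          rcases unit_or_mem k b with h | h
          · exact h
          · exact absurd (by rw [hb, mul_comm, (mem_span_xbar_iff k b).mp h]) h0
        set m := (xbar k • (LinearMap.id :
          DualNumbersRing k →ₗ[DualNumbersRing k] DualNumbersRing k)) with hm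
        refine ⟨m, m, fun s => end_commute k _ s, fun s => end_commute k _ s, ?_, ?_⟩
        · rw [end_range, ker_mulx k]
          apply le_antisymm <;> rw [Ideal.span_singleton_le_span_singleton]
          · exact ⟨b, hb⟩
          · obtain ⟨u, hu⟩ := id hbu
            exact ⟨↑u⁻¹, by rw [hb, ← hu, mul_assoc, u.mul_inv, mul_one]⟩
        · rw [range_mulx k]
          ext z
          rw [LinearMap.mem_ker, end_apply k f z, hb, mem_span_xbar_iff,
            show z * (xbar k * b) = z * xbar k * b by ring, hbu.mul_left_eq_zero]
  · rintro ⟨e, he, hspan⟩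
    rcases unit_or_mem k e with hu | hm
    · rw [Ideal.span_singleton_eq_top.mpr hu] at hspan
      have h1 : (1 : DualNumbersRing k) ∈ Ideal.span {xbar k} := hspan ▸ Submodule.mem_top
      exact xbar_not_unit k (isUnit_of_dvd_one (Ideal.mem_span_singleton.mp h1))
    · have he0 : e * xbar k = 0 := (mem_span_xbar_iff k e).mp hm
      have hx : xbar k ∈ Ideal.span {e} := hspan ▸ Ideal.mem_span_singleton_self _
      obtain ⟨b, hb⟩ := Ideal.mem_span_singleton.mp hx
      apply xbar_ne_zero k
      calc xbar k = e * (e * b) := by rw [← mul_assoc, he, ← hb]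
        _ = e * xbar k := by rw [← hb]
        _ = 0 := he0
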